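/- Let n ≥ 1, p ≥ 0, and fix y ∈ ℝⁿ, X ∈ ℝⁿˣᵖ, β_x ∈ ℝᵖ, real numbers β_u, β_v, d, λ with λ ≥ 0 and β_u² + λ d² > 0, a matrix A ∈ ℝⁿˣⁿ, and v ∈ ℝⁿ with ‖v‖₂² = n. Define f(u) = (1/n)‖y − Xβ_x − u β_u − v β_v‖₂² + (λ/n²)‖A − d u vᵀ‖_F² for u ∈ ℝⁿ. Then the vector u* = (β_u² + λ d²)⁻¹ · [ β_u (y − Xβ_x − v β_v) + (λ d / n) A v ] is the unique global minimizer of f over ℝⁿ; that is, f(u) ≥ f(u*) for all u ∈ ℝⁿ, with equality if and only if u = u*. -/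

import Mathlib

private lemma quad_key (nR r Q S t s bu lam d : ℝ) (hnR : nR ≠ 0)
    (hs : s * (bu ^ 2 + lam * d ^ 2) * nR = bu * r * nR + lam * d * S) :
    (1 / nR) * (r - t * bu) ^ 2
      + (lam / nR ^ 2) * (Q - 2 * d * t * S + d ^ 2 * t ^ 2 * nR)
    = (1 / nR) * (r - s * bu) ^ 2
      + (lam / nR ^ 2) * (Q - 2 * d * s * S + d ^ 2 * s ^ 2 * nR)
      + ((bu ^ 2 + lam * d ^ 2) / nR) * (t - s) ^ 2 := by
  field_simp
  linear_combination (2 * (t - s)) * hs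

theorem stmt6 (n p : ℕ) (hn : 1 ≤ n)
    (y : Fin n → ℝ) (X : Matrix (Fin n) (Fin p) ℝ) (βx : Fin p → ℝ)
    (βu βv d lam : ℝ) (hlam : 0 ≤ lam) (hpos : 0 < βu ^ 2 + lam * d ^ 2)
    (A : Matrix (Fin n) (Fin n) ℝ)
    (v : Fin n → ℝ) (hv : ∑ i, (v i) ^ 2 = (n : ℝ)) :
    let f : (Fin n → ℝ) → ℝ := fun u =>
      (1 / (n : ℝ)) * ∑ i, (y i - X.mulVec βx i - u i * βu - v i * βv) ^ 2
        + (lam / (n : ℝ) ^ 2) * ∑ i, ∑ j, (A i j - d * u i * v j) ^ 2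
    let ustar : Fin n → ℝ := fun i =>
      (βu ^ 2 + lam * d ^ 2)⁻¹ *
        (βu * (y i - X.mulVec βx i - v i * βv) + (lam * d / (n : ℝ)) * A.mulVec v i)
    ∀ u : Fin n → ℝ, f ustar ≤ f u ∧ (f u = f ustar ↔ u = ustar) := by
  intro f ustar u
  have hnR : (n : ℝ) ≠ 0 := by positivity
  set r : Fin n → ℝ := fun i => y i - X.mulVec βx i - v i * βv with hr
  set S : Fin n → ℝ := fun i => A.mulVec v i with hS
  -- expansion of inner sum
  have hexp : ∀ (t : ℝ) (i : Fin n),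
      ∑ j, (A i j - d * t * v j) ^ 2
      = (∑ j, (A i j) ^ 2) - 2 * d * t * S i + d ^ 2 * t ^ 2 * n := by
    intro t i
    have : ∀ j, (A i j - d * t * v j) ^ 2
        = (A i j) ^ 2 - 2 * d * t * (A i j * v j) + d ^ 2 * t ^ 2 * (v j) ^ 2 := by
      intro j; ring
    simp only [this, Finset.sum_add_distrib, Finset.sum_sub_distrib,
      ← Finset.mul_sum, hv]
    simp [hS, Matrix.mulVec, dotProduct]
  have hfw : ∀ w : Fin n → ℝ, f w
      = ∑ i, ((1 / (n : ℝ)) * (r i - w i * βu) ^ 2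
          + (lam / (n : ℝ) ^ 2) * ((∑ j, (A i j) ^ 2) - 2 * d * w i * S i
              + d ^ 2 * (w i) ^ 2 * n)) := by
    intro w
    simp only [f, Finset.sum_add_distrib, Finset.mul_sum]
    congr 1
    · apply Finset.sum_congr rfl; intro i _; simp only [hr]; ring
    · apply Finset.sum_congr rfl; intro i _; rw [← Finset.mul_sum, hexp (w i) i]
  have hs : ∀ i, ustar i * (βu ^ 2 + lam * d ^ 2) * (n : ℝ)
      = βu * r i * (n : ℝ) + lam * d * S i := by
    intro i
    simp only [ustar, hr, hS]
    field_simp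
  have key : f u = f ustar + ((βu ^ 2 + lam * d ^ 2) / n) * ∑ i, (u i - ustar i) ^ 2 := by
    rw [hfw u, hfw ustar, Finset.mul_sum, ← Finset.sum_add_distrib]
    apply Finset.sum_congr rfl
    intro i _
    exact quad_key (n : ℝ) (r i) (∑ j, (A i j) ^ 2) (S i) (u i) (ustar i) βu lam d hnR (hs i)
  have hc : 0 < (βu ^ 2 + lam * d ^ 2) / n := by positivity
  have hsum : 0 ≤ ∑ i, (u i - ustar i) ^ 2 :=
    Finset.sum_nonneg fun i _ => sq_nonneg _
  constructor
  · rw [key]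
    have := mul_nonneg hc.le hsum
    linarith
  · constructor
    · intro h
      have hz : ∑ i, (u i - ustar i) ^ 2 = 0 := by
        have := key.symm.trans h
        have := mul_eq_zero.mp (by linarith : ((βu ^ 2 + lam * d ^ 2) / n) * ∑ i, (u i - ustar i) ^ 2 = 0)
        rcases this with h' | h'
        · exact absurd h' hc.ne'
        · exact h'
      funext i
      have := (Finset.sum_eq_zero_iff_of_nonneg (fun i _ => sq_nonneg (u i - ustar i))).mp hz i (Finset.mem_univ i)
      have := pow_eq_zero_iff (n := 2) (by norm_num) |>.mp this
      linarith [sub_eq_zero.mp this]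
    · intro h; rw [h]
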